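/- The free convolutional code of length 2 and rank 1 over ℤ/4 generated by the row matrix (1+D, 3+D) is catastrophic: every full-row-rank 1 × 2 polynomial matrix over (ℤ/4)[D] whose row span over the Laurent series ring (ℤ/4)((D)) equals this code admits an input Laurent series u ∈ (ℤ/4)((D)) of infinite Hamming weight such that u·(g₁, g₂) has finite Hamming weight. -/

import Mathlib

open Polynomial Matrix

/-- The natural ring homomorphism from polynomials over a commutative ring to Laurent series. -/
noncomputable def polyToLS (R : Type*) [CommRing R] : Polynomial R →+* LaurentSeries R :=
  (HahnSeries.ofPowerSeries ℤ R).comp Polynomial.coeToPowerSeries.ringHom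

/-- The `k × k` minor of a `k × n` matrix determined by a choice of columns. -/
noncomputable def minorOn {R : Type*} [CommRing R] {k n : ℕ}
    (G : Matrix (Fin k) (Fin n) R) (c : Fin k → Fin n) : R :=
  (G.submatrix id c).det

/-- A polynomial matrix has full row rank if some maximal minor is a non-zero-divisor. -/
def FullRowRank {R : Type*} [CommRing R] {k n : ℕ}
    (G : Matrix (Fin k) (Fin n) (Polynomial R)) : Prop :=
  ∃ c : Fin k → Fin n, minorOn G c ∈ nonZeroDivisors (Polynomial R)

/-- The free convolutional code (row span over the Laurent series ring) generated by `G`. -/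
noncomputable def code {R : Type*} [CommRing R] {k n : ℕ}
    (G : Matrix (Fin k) (Fin n) (Polynomial R)) : Set (Fin n → LaurentSeries R) :=
  {v | ∃ u : Fin k → LaurentSeries R, v = Matrix.vecMul u (G.map (polyToLS R))}

/-- The internal degree of a polynomial matrix: the maximal degree of its maximal minors. -/
noncomputable def intdeg {R : Type*} [CommRing R] {k n : ℕ}
    (G : Matrix (Fin k) (Fin n) (Polynomial R)) : WithBot ℕ :=
  Finset.univ.sup fun c : Fin k → Fin n => (minorOn G c).degree

/-- Coefficientwise/entrywise reduction modulo `p` of a matrix over `(ℤ/p^r)[D]`. -/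
noncomputable def reduceMod (p r : ℕ) (hr : r ≠ 0) {k n : ℕ}
    (G : Matrix (Fin k) (Fin n) (Polynomial (ZMod (p ^ r)))) :
    Matrix (Fin k) (Fin n) (Polynomial (ZMod p)) :=
  G.map (Polynomial.map (ZMod.castHom (dvd_pow_self p hr) (ZMod p)))

/-- The monic greatest common divisor in `𝔽_p[D]` of the maximal minors of a matrix. -/
noncomputable def gcdMinors {p : ℕ} [Fact p.Prime] {k n : ℕ}
    (G : Matrix (Fin k) (Fin n) (Polynomial (ZMod p))) : Polynomial (ZMod p) :=
  Finset.univ.gcd fun c : Fin k → Fin n => minorOn G c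

/-- A vector of Laurent series has finite Hamming weight iff each component has
finitely many nonzero coefficients. -/
def FiniteWeight {R : Type*} [CommRing R] {m : ℕ} (v : Fin m → LaurentSeries R) : Prop :=
  ∀ i, (v i).support.Finite

/-- A polynomial generator matrix is non-catastrophic if every input whose output has finite
Hamming weight itself has finite Hamming weight. -/
noncomputable def NonCatastrophic {R : Type*} [CommRing R] {k n : ℕ}
    (G : Matrix (Fin k) (Fin n) (Polynomial R)) : Prop :=
  ∀ u : Fin k → LaurentSeries R,
    FiniteWeight (Matrix.vecMul u (G.map (polyToLS R))) → FiniteWeight u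

/-- The dual of a set of words: all vectors orthogonal to every word. -/
def dualCode {R : Type*} [CommRing R] {n : ℕ}
    (C : Set (Fin n → LaurentSeries R)) : Set (Fin n → LaurentSeries R) :=
  {v | ∀ w ∈ C, ∑ i, v i * w i = 0}

/-! ### Auxiliary material -/

/-- Reduction `ℤ/4 → ℤ/2`. -/
abbrev phi4 : ZMod 4 →+* ZMod 2 := ZMod.castHom (by norm_num : (2:ℕ) ∣ 4) (ZMod 2)

lemma zmod_two_mul_eq {c d : ZMod 4} (h : 2 * c = 2 * d) : phi4 c = phi4 d := by
  revert h; fin_cases c <;> fin_cases d <;> decide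

lemma zmod_phi_zero {c : ZMod 4} (h : phi4 c = 0) : 2 * (if c = 2 then (1:ZMod 4) else 0) = c := by
  revert h; revert c; decide

lemma zmod_phi_zero' {c : ZMod 4} (h : phi4 c = 0) : 2 * c = 0 := by
  revert h; fin_cases c <;> decide

lemma polyToLS_coeff {R : Type*} [CommRing R] (p : R[X]) (i : ℤ) :
    (polyToLS R p).coeff i = if i < 0 then 0 else p.coeff i.natAbs := by
  show ((HahnSeries.ofPowerSeries ℤ R) (coeToPowerSeries.ringHom p)).coeff i = _
  rw [coeToPowerSeries.ringHom_apply, PowerSeries.coeff_coe]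
  simp [Polynomial.coeff_coe]

lemma polyToLS_injective {R : Type*} [CommRing R] : Function.Injective (polyToLS R) := by
  intro p q h
  ext n
  have := congrArg (fun z => HahnSeries.coeff z (n:ℤ)) h
  simpa [polyToLS_coeff, not_lt.mpr (Int.natCast_nonneg n)] using this

lemma polyToLS_X_pow {R : Type*} [CommRing R] (N : ℕ) :
    polyToLS R (X ^ N) = HahnSeries.single (N : ℤ) 1 := by
  have hX : polyToLS R X = HahnSeries.single (1:ℤ) 1 := by
    show (HahnSeries.ofPowerSeries ℤ R) (coeToPowerSeries.ringHom X) = _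
    rw [coeToPowerSeries.ringHom_apply, Polynomial.coe_X, HahnSeries.ofPowerSeries_X]
  rw [map_pow, hX, HahnSeries.single_pow]
  simp

lemma support_polyToLS_finite {R : Type*} [CommRing R] (p : R[X]) :
    (polyToLS R p).support.Finite := by
  apply Set.Finite.subset (Set.Finite.image (fun n : ℕ => (n:ℤ)) p.support.finite_toSet)
  intro i hi
  rw [HahnSeries.mem_support, polyToLS_coeff] at hi
  split_ifs at hi with h
  · exact absurd rfl hi
  · exact ⟨i.natAbs, by simpa using hi, by simpa using Int.natAbs_of_nonneg (not_lt.mp h)⟩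

/-- A finite-support Laurent series times a suitable power of `X` is a polynomial. -/
lemma finsupp_to_poly {K : Type*} [CommRing K] (ξ : LaurentSeries K) (h : ξ.support.Finite) :
    ∃ (N : ℕ) (q : K[X]), HahnSeries.single (N:ℤ) 1 * ξ = polyToLS K q := by
  classical
  set S := h.toFinset with hS
  set N : ℕ := S.sup fun n => (-n).toNat with hNdef
  have hN : ∀ n ∈ S, 0 ≤ n + N := by
    intro n hn
    have : (-n).toNat ≤ N := Finset.le_sup (f := fun n => (-n).toNat) hn
    omega
  refine ⟨N, ∑ n ∈ S, Polynomial.C (ξ.coeff n) * X ^ (n + N).toNat, ?_⟩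
  ext i
  rw [show i = (i - N) + (N:ℤ) by ring]
  rw [HahnSeries.coeff_single_mul_add, one_mul, polyToLS_coeff]
  have hsum : ∀ m : ℕ, (∑ n ∈ S, Polynomial.C (ξ.coeff n) * X ^ (n + N).toNat).coeff m
      = ∑ n ∈ S, ξ.coeff n * (if m = (n + N).toNat then 1 else 0) := by
    intro m
    rw [Polynomial.finset_sum_coeff]
    refine Finset.sum_congr rfl fun n _ => ?_
    rw [Polynomial.coeff_C_mul, Polynomial.coeff_X_pow]
  by_cases hmem : i - N ∈ S
  · have hnn : (0:ℤ) ≤ (i - N) + N := by have := hN _ hmem; omega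
    rw [if_neg (by omega), hsum]
    rw [Finset.sum_eq_single (i - N)]
    · rw [if_pos (by omega), mul_one]
    · intro n hn hne
      rw [if_neg (by have := hN n hn; omega), mul_zero]
    · intro hn; exact absurd hmem hn
  · have h0 : ξ.coeff (i - N) = 0 := by
      by_contra hc
      exact hmem (h.mem_toFinset.mpr hc)
    rw [h0]
    split_ifs with hi0
    · rfl
    · rw [hsum]
      symm
      refine Finset.sum_eq_zero fun n hn => ?_
      rw [if_neg ?_, mul_zero]
      intro hEq
      have := hN n hn
      have : n = i - N := by omega
      exact hmem (this ▸ hn)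

/-- Coefficientwise reduction mod 2 of a `ℤ/4` Laurent series. -/
noncomputable def ΦLS (a : LaurentSeries (ZMod 4)) : LaurentSeries (ZMod 2) :=
  a.map phi4.toNonUnitalRingHom

lemma ΦLS_coeff (a : LaurentSeries (ZMod 4)) (n : ℤ) :
    (ΦLS a).coeff n = phi4 (a.coeff n) := rfl

lemma ΦLS_mul (a b : LaurentSeries (ZMod 4)) : ΦLS (a * b) = ΦLS a * ΦLS b :=
  HahnSeries.map_mul phi4.toNonUnitalRingHom

lemma ΦLS_one : ΦLS 1 = 1 := by
  ext n
  rw [ΦLS_coeff, HahnSeries.coeff_one, HahnSeries.coeff_one]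
  split_ifs <;> decide

lemma ΦLS_sub (a b : LaurentSeries (ZMod 4)) : ΦLS (a - b) = ΦLS a - ΦLS b := by
  ext n
  rw [ΦLS_coeff, HahnSeries.coeff_sub, HahnSeries.coeff_sub, map_sub, ΦLS_coeff, ΦLS_coeff]

lemma ΦLS_polyToLS (p : (ZMod 4)[X]) :
    ΦLS (polyToLS (ZMod 4) p) = polyToLS (ZMod 2) (p.map phi4) := by
  ext n
  rw [ΦLS_coeff, polyToLS_coeff, polyToLS_coeff, Polynomial.coeff_map]
  split_ifs <;> simp

lemma coeff_two (n : ℤ) : (2 : LaurentSeries (ZMod 4)).coeff n = if n = 0 then 2 else 0 := by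
  rw [← one_add_one_eq_two, HahnSeries.coeff_add, HahnSeries.coeff_one]
  split_ifs <;> norm_num

lemma two_eq_single : (2 : LaurentSeries (ZMod 4)) = HahnSeries.single (0:ℤ) 2 := by
  ext n
  rw [coeff_two, HahnSeries.coeff_single]
  split_ifs <;> rfl

lemma two_mul_coeff (a : LaurentSeries (ZMod 4)) (n : ℤ) :
    (2 * a).coeff n = 2 * a.coeff n := by
  rw [two_eq_single, HahnSeries.coeff_single_zero_mul]

lemma ΦLS_two : ΦLS 2 = 0 := by
  ext n
  rw [ΦLS_coeff, coeff_two]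
  split_ifs <;> rfl

lemma two_cancel {a b : LaurentSeries (ZMod 4)} (h : 2 * a = 2 * b) : ΦLS a = ΦLS b := by
  ext n
  rw [ΦLS_coeff, ΦLS_coeff]
  exact zmod_two_mul_eq (by rw [← two_mul_coeff, ← two_mul_coeff, h])

lemma exists_half (a : LaurentSeries (ZMod 4)) (h : ΦLS a = 0) :
    ∃ y : LaurentSeries (ZMod 4), a = 2 * y ∧ (ΦLS y).support ⊆ a.support := by
  classical
  have hcoeff : ∀ n, phi4 (a.coeff n) = 0 := fun n => by
    rw [← ΦLS_coeff, h]; rfl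
  refine ⟨⟨fun n => if a.coeff n = 2 then 1 else 0, ?_⟩, ?_, ?_⟩
  · refine a.isPWO_support.mono fun n hn => ?_
    rw [Function.mem_support] at hn
    rw [HahnSeries.mem_support]
    intro h0
    exact hn (by rw [if_neg (by rw [h0]; decide)])
  · ext n
    rw [two_mul_coeff]
    exact (zmod_phi_zero (hcoeff n)).symm
  · intro n hn
    rw [HahnSeries.mem_support, ΦLS_coeff] at hn
    rw [HahnSeries.mem_support]
    intro h0
    apply hn
    show phi4 (if a.coeff n = 2 then (1:ZMod 4) else 0) = 0
    rw [if_neg (by rw [h0]; decide)]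
    exact map_zero _

lemma ps_mul (c : ZMod 4) (hc : 2 * c = 2) :
    (PowerSeries.mk fun _ => (2 : ZMod 4)) * ((C c + X : (ZMod 4)[X]) : PowerSeries (ZMod 4))
      = 2 := by
  have : ((C c + X : (ZMod 4)[X]) : PowerSeries (ZMod 4))
      = PowerSeries.C c + PowerSeries.X := by
    rw [Polynomial.coe_add, Polynomial.coe_C, Polynomial.coe_X]
  rw [this, mul_add]
  ext n
  have h2 : (2 : PowerSeries (ZMod 4)) = PowerSeries.C 2 := by
    rw [map_ofNat]
  rw [h2, map_add, PowerSeries.coeff_mul_C, PowerSeries.coeff_C]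
  cases n with
  | zero =>
    rw [PowerSeries.coeff_zero_mul_X, PowerSeries.coeff_mk]
    simpa [mul_comm] using hc
  | succ m =>
    rw [PowerSeries.coeff_succ_mul_X, PowerSeries.coeff_mk, PowerSeries.coeff_mk]
    rw [if_neg (by omega), hc]
    decide

lemma u0_mul (c : ZMod 4) (hc : 2 * c = 2) :
    (HahnSeries.ofPowerSeries ℤ (ZMod 4)) (PowerSeries.mk fun _ => (2 : ZMod 4))
      * polyToLS (ZMod 4) (C c + X) = 2 := by
  have : polyToLS (ZMod 4) (C c + X)
      = (HahnSeries.ofPowerSeries ℤ (ZMod 4)) ((C c + X : (ZMod 4)[X]) : PowerSeries (ZMod 4)) := by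
    show (HahnSeries.ofPowerSeries ℤ (ZMod 4)) (coeToPowerSeries.ringHom _) = _
    rw [coeToPowerSeries.ringHom_apply]
  rw [this, ← _root_.map_mul, ps_mul c hc, map_ofNat]

/-- The free convolutional code over `ℤ/4` generated by `(1 + D, 3 + D)` is catastrophic:
every equivalent full-row-rank polynomial generator matrix admits an input of infinite
Hamming weight with output of finite Hamming weight. -/
theorem code_one_add_D_three_add_D_catastrophic :
    ∀ g : Matrix (Fin 1) (Fin 2) (Polynomial (ZMod 4)),
      FullRowRank g →
      code g = code (!![1 + Polynomial.X, 3 + Polynomial.X]) →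
      ∃ u : LaurentSeries (ZMod 4),
        u.support.Infinite ∧
          ∀ j : Fin 2, (u * polyToLS (ZMod 4) (g 0 j)).support.Finite := by
  intro g hFRR hcode
  have e0 : (!![1 + Polynomial.X, 3 + Polynomial.X] : Matrix (Fin 1) (Fin 2) ((ZMod 4)[X])) 0 0
      = C 1 + X := by simp
  have e1 : (!![1 + Polynomial.X, 3 + Polynomial.X] : Matrix (Fin 1) (Fin 2) ((ZMod 4)[X])) 0 1
      = C 3 + X := by
    have : (C (3 : ZMod 4) : (ZMod 4)[X]) = 3 := by rw [map_ofNat]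
    simp [this]
  -- the constant word (2,2) lies in the code generated by (1+X, 3+X)
  have h22 : (fun _ : Fin 2 => (2 : LaurentSeries (ZMod 4)))
      ∈ code (!![1 + Polynomial.X, 3 + Polynomial.X]) := by
    refine ⟨fun _ => (HahnSeries.ofPowerSeries ℤ (ZMod 4)) (PowerSeries.mk fun _ => 2), ?_⟩
    funext j
    fin_cases j
    · simp only [Matrix.vecMul, dotProduct, Fin.sum_univ_one, Matrix.map_apply, e0]
      exact (u0_mul 1 (by decide)).symm
    · simp only [Matrix.vecMul, dotProduct, Fin.sum_univ_one, Matrix.map_apply, e1]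
      exact (u0_mul 3 (by decide)).symm
  rw [← hcode] at h22
  obtain ⟨u, hu⟩ := h22
  have hw : ∀ j, u 0 * polyToLS (ZMod 4) (g 0 j) = 2 := by
    intro j
    have := congrFun hu j
    simp only [Matrix.vecMul, dotProduct, Fin.sum_univ_one, Matrix.map_apply] at this
    exact this.symm
  -- the generator row of (1+X, 3+X) lies in code g
  have hrow : (fun j => polyToLS (ZMod 4)
        ((!![1 + Polynomial.X, 3 + Polynomial.X] : Matrix (Fin 1) (Fin 2) ((ZMod 4)[X])) 0 j))
      ∈ code (!![1 + Polynomial.X, 3 + Polynomial.X]) := by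
    refine ⟨fun _ => 1, ?_⟩
    funext j
    simp [Matrix.vecMul, dotProduct, Fin.sum_univ_one, Matrix.map_apply]
  rw [← hcode] at hrow
  obtain ⟨us, hus⟩ := hrow
  have hs : ∀ j, us 0 * polyToLS (ZMod 4) (g 0 j) = polyToLS (ZMod 4)
      ((!![1 + Polynomial.X, 3 + Polynomial.X] : Matrix (Fin 1) (Fin 2) ((ZMod 4)[X])) 0 j) := by
    intro j
    have := congrFun hus j
    simp only [Matrix.vecMul, dotProduct, Fin.sum_univ_one, Matrix.map_apply] at this
    exact this.symm
  refine ⟨u 0, ?_, ?_⟩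
  · -- infinite support
    by_contra hinf
    rw [Set.not_infinite] at hinf
    -- full row rank gives a column whose mod-2 reduction is nonzero
    obtain ⟨c, hc⟩ := hFRR
    have hminor : minorOn g c = g 0 (c 0) := by
      unfold minorOn
      rw [Matrix.det_fin_one, Matrix.submatrix_apply]
      rfl
    rw [hminor] at hc
    have hgbar : (g 0 (c 0)).map phi4 ≠ 0 := by
      intro h0
      have h2p : Polynomial.C (2 : ZMod 4) * g 0 (c 0) = 0 := by
        ext n
        rw [Polynomial.coeff_C_mul, Polynomial.coeff_zero]
        apply zmod_phi_zero'
        rw [← Polynomial.coeff_map, h0, Polynomial.coeff_zero]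
      have := (mem_nonZeroDivisors_iff.mp hc).2 _ h2p
      exact (by decide : (2 : ZMod 4) ≠ 0) (Polynomial.C_eq_zero.mp this)
    -- the reduction of w = u 0 is zero
    have hΦw0 : ΦLS (u 0) = 0 := by
      have h1 : ΦLS (u 0) * polyToLS (ZMod 2) ((g 0 (c 0)).map phi4) = 0 := by
        rw [← ΦLS_polyToLS, ← ΦLS_mul, hw (c 0), ΦLS_two]
      rcases mul_eq_zero.mp h1 with h | h
      · exact h
      · exact absurd (polyToLS_injective (h.trans (map_zero _).symm)) hgbar
    obtain ⟨x, hx2, hxsupp⟩ := exists_half (u 0) hΦw0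
    -- Φx inverts both reduced generators
    have hA : ∀ j, ΦLS x * polyToLS (ZMod 2) ((g 0 j).map phi4) = 1 := by
      intro j
      have h1 : 2 * (x * polyToLS (ZMod 4) (g 0 j)) = 2 * 1 := by
        rw [← mul_assoc, ← hx2, hw j, mul_one]
      have := two_cancel h1
      rwa [ΦLS_mul, ΦLS_polyToLS, ΦLS_one] at this
    have hxne : ΦLS x ≠ 0 := by
      intro h0
      have := hA 0
      rw [h0, zero_mul] at this
      exact zero_ne_one this
    have hAB : polyToLS (ZMod 2) ((g 0 0).map phi4) = polyToLS (ZMod 2) ((g 0 1).map phi4) :=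
      mul_left_cancel₀ hxne ((hA 0).trans (hA 1).symm)
    -- the difference of columns is 2·(finite weight series)
    have hq : ΦLS (polyToLS (ZMod 4) (g 0 1) - polyToLS (ZMod 4) (g 0 0)) = 0 := by
      rw [ΦLS_sub, ΦLS_polyToLS, ΦLS_polyToLS, hAB, sub_self]
    obtain ⟨y, hy2, hysupp⟩ := exists_half _ hq
    have hyfin : (ΦLS y).support.Finite := by
      apply Set.Finite.subset (support_polyToLS_finite (g 0 1 - g 0 0))
      rw [map_sub]
      exact hysupp
    -- s·(difference) = 2 gives Φs · Φy = 1
    have hdiff : us 0 * (polyToLS (ZMod 4) (g 0 1) - polyToLS (ZMod 4) (g 0 0)) = 2 := by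
      rw [mul_sub, hs 1, hs 0, e0, e1, ← map_sub]
      have : (C (3:ZMod 4) + X) - (C 1 + X) = C 2 := by
        rw [add_sub_add_right_eq_sub, ← Polynomial.C_sub,
          show (3:ZMod 4) - 1 = 2 by decide]
      rw [this]
      have : (Polynomial.C (2 : ZMod 4)) = (2 : (ZMod 4)[X]) := by rw [map_ofNat]
      rw [this, map_ofNat]
    have hsy : ΦLS (us 0) * ΦLS y = 1 := by
      have h1 : 2 * (us 0 * y) = 2 * 1 := by
        have h2y : us 0 * (2 * y) = 2 := by rw [← hy2]; exact hdiff
        calc 2 * (us 0 * y) = us 0 * (2 * y) := by ring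
          _ = 2 * 1 := by rw [h2y, mul_one]
      have := two_cancel h1
      rwa [ΦLS_mul, ΦLS_one] at this
    have hsA : ΦLS (us 0) * polyToLS (ZMod 2) ((g 0 0).map phi4)
        = polyToLS (ZMod 2) (1 + X) := by
      have := congrArg ΦLS (hs 0)
      rw [ΦLS_mul, ΦLS_polyToLS, ΦLS_polyToLS, e0] at this
      rw [this]
      congr 1
      rw [Polynomial.map_add, Polynomial.map_C, Polynomial.map_X,
        show phi4 (1:ZMod 4) = 1 from rfl, Polynomial.C_1]
    -- key factorization
    have hkey : polyToLS (ZMod 2) ((g 0 0).map phi4)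
        = polyToLS (ZMod 2) (1 + X) * ΦLS y := by
      calc polyToLS (ZMod 2) ((g 0 0).map phi4)
          = polyToLS (ZMod 2) ((g 0 0).map phi4) * (ΦLS (us 0) * ΦLS y) := by
            rw [hsy, mul_one]
        _ = (ΦLS (us 0) * polyToLS (ZMod 2) ((g 0 0).map phi4)) * ΦLS y := by ring
        _ = polyToLS (ZMod 2) (1 + X) * ΦLS y := by rw [hsA]
    obtain ⟨N, qy, hqy⟩ := finsupp_to_poly (ΦLS y) hyfin
    have hE1 : X ^ N * ((g 0 0).map phi4) = (1 + X) * qy := by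
      apply polyToLS_injective
      rw [_root_.map_mul, _root_.map_mul, polyToLS_X_pow, ← hqy, hkey]
      ring
    have hxfin : (ΦLS x).support.Finite := Set.Finite.subset hinf hxsupp
    obtain ⟨M, p, hp⟩ := finsupp_to_poly (ΦLS x) hxfin
    have hE2 : (X : (ZMod 2)[X]) ^ M = p * ((g 0 0).map phi4) := by
      apply polyToLS_injective
      rw [_root_.map_mul, polyToLS_X_pow, ← hp]
      calc HahnSeries.single (M:ℤ) 1
          = HahnSeries.single (M:ℤ) 1 * (ΦLS x * polyToLS (ZMod 2) ((g 0 0).map phi4)) := by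
            rw [hA 0, mul_one]
        _ = (HahnSeries.single (M:ℤ) 1 * ΦLS x) * polyToLS (ZMod 2) ((g 0 0).map phi4) := by
            ring
    have hfinal : (X : (ZMod 2)[X]) ^ (M + N) = p * ((1 + X) * qy) := by
      rw [pow_add, hE2]
      calc p * ((g 0 0).map phi4) * X ^ N = p * (X ^ N * ((g 0 0).map phi4)) := by ring
        _ = p * ((1 + X) * qy) := by rw [hE1]
    have := congrArg (Polynomial.eval 1) hfinal
    simp only [Polynomial.eval_pow, Polynomial.eval_X, Polynomial.eval_mul,
      Polynomial.eval_add, Polynomial.eval_one, one_pow] at this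
    rw [show (1 : ZMod 2) + 1 = 0 from rfl] at this
    simp at this
  · intro j
    rw [hw j, two_eq_single]
    exact Set.Finite.subset (Set.finite_singleton 0) HahnSeries.support_single_subset
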